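/- Let d be a natural number, let E = EuclideanSpace ℝ (Fin d), let L ≥ 0 and let F : E → ℝ be differentiable with gradient ∇F : E → E that is L-Lipschitz. Let γ > 0 and let μ be the product measure on E whose coordinates are i.i.d. real Gaussian measures with mean 0 and variance 2γ. Then for every x ∈ E, the function z ↦ F(x + z) is μ-integrable and ∫ F(x + z) dμ(z) − F(x) ≤ L·d·γ. -/

import Mathlib

open MeasureTheory ProbabilityTheory Real Set Filter InnerProductSpace
open scoped NNReal ENNReal RealInnerProductSpace

lemma map_eval_pi' {ι : Type*} [Fintype ι] {α : ι → Type*} [∀ i, MeasurableSpace (α i)]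
    (μ : ∀ i, Measure (α i)) [∀ i, IsProbabilityMeasure (μ i)] (i : ι) :
    Measure.map (Function.eval i) (Measure.pi μ) = μ i := by
  classical
  ext s hs
  rw [Measure.map_apply (measurable_pi_apply i) hs, Set.eval_preimage, Measure.pi_pi]
  rw [Finset.prod_eq_single i (fun j _ hj => by simp [Function.update_of_ne hj])
    (by simp)]
  simp

lemma integral_sq_exp' {b : ℝ} (hb : 0 < b) :
    ∫ x : ℝ, x ^ 2 * rexp (-b * x ^ 2) = (2 * b)⁻¹ * Real.sqrt (π / b) := by
  have hsq : Integrable (fun x : ℝ => x ^ 2 * rexp (-b * x ^ 2)) := by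
    have := integrable_rpow_mul_exp_neg_mul_sq hb (s := ((2 : ℕ) : ℝ)) (by norm_num)
    simpa [Real.rpow_natCast] using this
  have hu : ∀ t : ℝ, HasDerivAt (fun s : ℝ => s) 1 t := fun t => hasDerivAt_id t
  have hv : ∀ t : ℝ, HasDerivAt (fun s : ℝ => -(2 * b)⁻¹ * rexp (-b * s ^ 2))
      (t * rexp (-b * t ^ 2)) t := by
    intro t
    have h1 : HasDerivAt (fun s : ℝ => -b * s ^ 2) (-b * (2 * t ^ 1)) t :=
      (hasDerivAt_pow 2 t).const_mul (-b)
    have h2 := (h1.exp).const_mul (-(2 * b)⁻¹)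
    refine h2.congr_deriv ?_
    field_simp
  have key := integral_mul_deriv_eq_deriv_mul_of_integrable (fun t _ => hu t) (fun t _ => hv t) ?_ ?_ ?_
  · have h1 : ∀ t : ℝ, t * (t * rexp (-b * t ^ 2)) = t ^ 2 * rexp (-b * t ^ 2) := by
      intro t; ring
    calc ∫ x : ℝ, x ^ 2 * rexp (-b * x ^ 2)
        = ∫ x : ℝ, x * (x * rexp (-b * x ^ 2)) := by simp_rw [h1]
      _ = - ∫ x : ℝ, 1 * (-(2 * b)⁻¹ * rexp (-b * x ^ 2)) := key
      _ = (2 * b)⁻¹ * ∫ x : ℝ, rexp (-b * x ^ 2) := by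
          simp_rw [one_mul, neg_mul]
          rw [integral_neg, integral_const_mul, neg_neg]
      _ = (2 * b)⁻¹ * Real.sqrt (π / b) := by rw [integral_gaussian]
  · -- Integrable (u * v')
    have : (fun t : ℝ => t * (t * rexp (-b * t ^ 2)))
        = fun t : ℝ => t ^ 2 * rexp (-b * t ^ 2) := by funext t; ring
    rw [Pi.mul_def]
    apply hsq.congr
    filter_upwards with t
    ring
  · -- Integrable (u' * v)
    simpa [Pi.mul_def] using ((integrable_exp_neg_mul_sq hb).const_mul (-(2 * b)⁻¹))
  · -- Integrable (u * v)
    have := (integrable_mul_exp_neg_mul_sq hb).const_mul (-(2 * b)⁻¹)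
    apply Integrable.congr this
    filter_upwards with t
    simp [Pi.mul_def]; ring

section Gauss
variable {v : ℝ≥0}

lemma gaussianPDFReal_zero_mean_eq (v : ℝ≥0) (x : ℝ) :
    gaussianPDFReal 0 v x = (Real.sqrt (2 * π * v))⁻¹ * rexp (-(2 * (v : ℝ))⁻¹ * x ^ 2) := by
  rw [gaussianPDFReal]
  congr 1
  rw [sub_zero, neg_div, neg_mul, div_eq_inv_mul]

lemma gaussianReal_zero_eq_withDensity (hv : v ≠ 0) :
    gaussianReal 0 v = volume.withDensity
      (fun x => ((gaussianPDFReal 0 v x).toNNReal : ℝ≥0∞)) := by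
  rw [gaussianReal_of_var_ne_zero _ hv]
  congr 1

lemma measurable_pdf_toNNReal (v : ℝ≥0) :
    Measurable fun x => (gaussianPDFReal 0 v x).toNNReal :=
  (measurable_gaussianPDFReal 0 v).real_toNNReal

lemma integrable_gaussianReal_iff (hv : v ≠ 0) {g : ℝ → ℝ} :
    Integrable g (gaussianReal 0 v) ↔
      Integrable (fun x => gaussianPDFReal 0 v x * g x) volume := by
  rw [gaussianReal_zero_eq_withDensity hv,
    integrable_withDensity_iff_integrable_smul (measurable_pdf_toNNReal v)]
  refine integrable_congr ?_
  filter_upwards with x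
  rw [NNReal.smul_def, Real.coe_toNNReal _ (gaussianPDFReal_nonneg 0 v x), smul_eq_mul]

lemma integral_gaussianReal_eq (hv : v ≠ 0) (g : ℝ → ℝ) :
    ∫ x, g x ∂(gaussianReal 0 v) = ∫ x, gaussianPDFReal 0 v x * g x := by
  rw [gaussianReal_zero_eq_withDensity hv,
    integral_withDensity_eq_integral_smul (measurable_pdf_toNNReal v)]
  refine integral_congr_ae ?_
  filter_upwards with x
  rw [NNReal.smul_def, Real.coe_toNNReal _ (gaussianPDFReal_nonneg 0 v x), smul_eq_mul]

lemma coe_pos_of_ne_zero (hv : v ≠ 0) : (0 : ℝ) < (v : ℝ) :=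
  NNReal.coe_pos.2 (pos_iff_ne_zero.2 hv)

lemma b_pos (hv : v ≠ 0) : (0 : ℝ) < (2 * (v : ℝ))⁻¹ := by
  have := coe_pos_of_ne_zero hv; positivity

lemma integrable_id_gaussianReal' (hv : v ≠ 0) :
    Integrable (fun x : ℝ => x) (gaussianReal 0 v) := by
  rw [integrable_gaussianReal_iff hv]
  have h := (integrable_mul_exp_neg_mul_sq (b_pos hv)).const_mul
    ((Real.sqrt (2 * π * v))⁻¹)
  apply h.congr
  filter_upwards with x
  rw [gaussianPDFReal_zero_mean_eq]
  ring

lemma integrable_sq_gaussianReal' (hv : v ≠ 0) :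
    Integrable (fun x : ℝ => x ^ 2) (gaussianReal 0 v) := by
  rw [integrable_gaussianReal_iff hv]
  have h0 := integrable_rpow_mul_exp_neg_mul_sq (b_pos hv) (s := ((2 : ℕ) : ℝ)) (by norm_num)
  have h := h0.const_mul ((Real.sqrt (2 * π * v))⁻¹)
  apply h.congr
  filter_upwards with x
  rw [gaussianPDFReal_zero_mean_eq, Real.rpow_natCast]
  ring

lemma integral_id_gaussianReal' (hv : v ≠ 0) :
    ∫ x, x ∂(gaussianReal 0 v) = 0 := by
  rw [integral_gaussianReal_eq hv]
  have hodd : ∀ x : ℝ, gaussianPDFReal 0 v (-x) * (-x) = -(gaussianPDFReal 0 v x * x) := by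
    intro x
    rw [gaussianPDFReal_zero_mean_eq, gaussianPDFReal_zero_mean_eq, neg_sq]
    ring
  have h := integral_neg_eq_self (fun x : ℝ => gaussianPDFReal 0 v x * x) volume
  simp_rw [hodd, integral_neg] at h
  linarith

lemma integral_sq_gaussianReal' (hv : v ≠ 0) :
    ∫ x, x ^ 2 ∂(gaussianReal 0 v) = (v : ℝ) := by
  rw [integral_gaussianReal_eq hv]
  have hvpos := coe_pos_of_ne_zero hv
  have hb := b_pos hv
  have hcalc : ∫ x : ℝ, gaussianPDFReal 0 v x * x ^ 2
      = (Real.sqrt (2 * π * v))⁻¹ * ∫ x : ℝ, x ^ 2 * rexp (-(2 * (v : ℝ))⁻¹ * x ^ 2) := by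
    rw [← integral_const_mul]
    congr 1; funext x
    rw [gaussianPDFReal_zero_mean_eq]; ring
  rw [hcalc, integral_sq_exp' hb]
  have h1 : (2 * (2 * (v : ℝ))⁻¹)⁻¹ = (v : ℝ) := by
    field_simp
  have h2 : π / (2 * (v : ℝ))⁻¹ = 2 * π * (v : ℝ) := by
    field_simp
  rw [h1, h2]
  have hs : Real.sqrt (2 * π * (v : ℝ)) ≠ 0 := by
    refine (Real.sqrt_ne_zero ?_).2 ?_ <;> [skip; positivity]
    positivity
  field_simp

end Gauss
lemma descent_lemma {E : Type*} [NormedAddCommGroup E] [InnerProductSpace ℝ E] [CompleteSpace E]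
    {L : ℝ≥0} {F : E → ℝ} {gradF : E → E}
    (hF : ∀ y, HasGradientAt F (gradF y) y) (hLip : LipschitzWith L gradF)
    (x z : E) :
    F (x + z) - F x - ⟪gradF x, z⟫ ≤ (L : ℝ) / 2 * ‖z‖ ^ 2 := by
  set φ : ℝ → E := fun t => x + t • z with hφdef
  have hφ : ∀ t : ℝ, HasDerivAt φ z t := by
    intro t
    have := ((hasDerivAt_id t).smul_const z).const_add x
    simpa [hφdef] using this
  have hg : ∀ t : ℝ, HasDerivAt (fun s => F (φ s)) ⟪gradF (φ t), z⟫ t := by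
    intro t
    have := (hF (φ t)).hasFDerivAt.comp_hasDerivAt t (hφ t)
    simp [InnerProductSpace.toDual_apply_apply] at this
    exact this
  set h : ℝ → ℝ := fun t => F (φ t) - t * ⟪gradF x, z⟫ - (L : ℝ) / 2 * t ^ 2 * ‖z‖ ^ 2
    with hhdef
  have hh : ∀ t : ℝ, HasDerivAt h
      (⟪gradF (φ t), z⟫ - ⟪gradF x, z⟫ - (L : ℝ) * t * ‖z‖ ^ 2) t := by
    intro t
    have h2 : HasDerivAt (fun s : ℝ => s * ⟪gradF x, z⟫) ⟪gradF x, z⟫ t := by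
      simpa using (hasDerivAt_id t).mul_const ⟪gradF x, z⟫
    have h3 : HasDerivAt (fun s : ℝ => (L : ℝ) / 2 * s ^ 2 * ‖z‖ ^ 2)
        ((L : ℝ) * t * ‖z‖ ^ 2) t := by
      have := ((hasDerivAt_pow 2 t).const_mul ((L : ℝ) / 2)).mul_const (‖z‖ ^ 2)
      refine this.congr_deriv ?_
      simp only [Nat.cast_ofNat, Nat.reduceSub, pow_one]
      ring
    exact ((hg t).sub h2).sub h3
  have hnonpos : ∀ t ∈ interior (Icc (0 : ℝ) 1), deriv h t ≤ 0 := by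
    intro t ht
    rw [interior_Icc] at ht
    rw [(hh t).deriv]
    have hbound : ⟪gradF (φ t) - gradF x, z⟫ ≤ (L : ℝ) * t * ‖z‖ ^ 2 := by
      calc ⟪gradF (φ t) - gradF x, z⟫ ≤ ‖gradF (φ t) - gradF x‖ * ‖z‖ :=
            real_inner_le_norm _ _
        _ ≤ (L : ℝ) * ‖φ t - x‖ * ‖z‖ := by
            have := hLip.dist_le_mul (φ t) x
            rw [dist_eq_norm, dist_eq_norm] at this
            exact mul_le_mul_of_nonneg_right this (norm_nonneg _)
        _ = (L : ℝ) * t * ‖z‖ ^ 2 := by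
            have : φ t - x = t • z := by simp [hφdef]
            rw [this, norm_smul, Real.norm_eq_abs, abs_of_pos ht.1]
            ring
    rw [inner_sub_left] at hbound
    linarith
  have hanti := antitoneOn_of_deriv_nonpos (convex_Icc (0 : ℝ) 1)
    (fun t _ => ((hh t).differentiableAt).continuousAt.continuousWithinAt)
    (fun t _ => ((hh t).differentiableAt).differentiableWithinAt) hnonpos
  have h10 : h 1 ≤ h 0 :=
    hanti (left_mem_Icc.2 zero_le_one) (right_mem_Icc.2 zero_le_one) zero_le_one
  have h0 : h 0 = F x := by simp [hhdef, hφdef]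
  have h1 : h 1 = F (x + z) - ⟪gradF x, z⟫ - (L : ℝ) / 2 * ‖z‖ ^ 2 := by
    simp [hhdef, hφdef]
  rw [h0, h1] at h10
  linarith

/-- The expected increase of a potential with L-Lipschitz gradient after convolution with
the Gaussian diffusion step N(0, 2γ I_d) is at most L·d·γ (Lemma 3.11 of the paper). -/
theorem potential_increase_gaussian_step
    (d : ℕ) (L γ : ℝ) (hL : 0 ≤ L) (hγ : 0 < γ)
    (F : EuclideanSpace ℝ (Fin d) → ℝ)
    (gradF : EuclideanSpace ℝ (Fin d) → EuclideanSpace ℝ (Fin d))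
    (hF : ∀ x, HasGradientAt F (gradF x) x)
    (hLip : LipschitzWith L.toNNReal gradF)
    (μ : Measure (EuclideanSpace ℝ (Fin d)))
    (hμ : μ = Measure.map (MeasurableEquiv.toLp 2 (Fin d → ℝ))
      (Measure.pi fun _ : Fin d => gaussianReal 0 (2 * γ).toNNReal))
    (x : EuclideanSpace ℝ (Fin d)) :
    Integrable (fun zz => F (x + zz)) μ ∧
      (∫ zz, F (x + zz) ∂μ) - F x ≤ L * d * γ := by
  have hvpos : (0 : ℝ) < 2 * γ := by linarith
  set v : ℝ≥0 := (2 * γ).toNNReal with hvdef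
  have hv : v ≠ 0 := by
    rw [hvdef, ne_eq, Real.toNNReal_eq_zero]
    push_neg
    linarith
  have hvr : (v : ℝ) = 2 * γ := Real.coe_toNNReal _ hvpos.le
  set e := (MeasurableEquiv.toLp 2 (Fin d → ℝ)).symm with hedef
  set P := Measure.pi fun _ : Fin d => gaussianReal 0 v with hPdef
  have hμ' : μ = Measure.map e.symm P := hμ
  haveI : IsProbabilityMeasure μ := by
    rw [hμ']
    exact Measure.isProbabilityMeasure_map (e.symm.measurable.aemeasurable)
  -- coordinate integrability and integrals
  have heval_int : ∀ i : Fin d, Integrable (fun y : Fin d → ℝ => y i) P := by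
    intro i
    have hmap := map_eval_pi' (fun _ : Fin d => gaussianReal 0 v) i
    have h := integrable_id_gaussianReal' hv
    rw [← hmap] at h
    have := (integrable_map_measure (f := Function.eval i)
      (μ := Measure.pi fun _ : Fin d => gaussianReal 0 v) (g := fun s : ℝ => s)
      aestronglyMeasurable_id (measurable_pi_apply i).aemeasurable).1 h
    exact this
  have heval_sq_int : ∀ i : Fin d, Integrable (fun y : Fin d → ℝ => (y i) ^ 2) P := by
    intro i
    have hmap := map_eval_pi' (fun _ : Fin d => gaussianReal 0 v) i
    have h := integrable_sq_gaussianReal' hv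
    rw [← hmap] at h
    have := (integrable_map_measure (f := Function.eval i)
      (μ := Measure.pi fun _ : Fin d => gaussianReal 0 v) (g := fun s : ℝ => s ^ 2)
      ((measurable_id.pow_const 2).aestronglyMeasurable)
      (measurable_pi_apply i).aemeasurable).1 h
    exact this
  have heval_eq : ∀ i : Fin d, ∫ y, y i ∂P = 0 := by
    intro i
    have hmap := map_eval_pi' (fun _ : Fin d => gaussianReal 0 v) i
    have h := integral_id_gaussianReal' hv
    rw [← hmap, integral_map (measurable_pi_apply i).aemeasurable
      (by rw [hmap]; exact aestronglyMeasurable_id)] at h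
    exact h
  have heval_sq_eq : ∀ i : Fin d, ∫ y, (y i) ^ 2 ∂P = (v : ℝ) := by
    intro i
    have hmap := map_eval_pi' (fun _ : Fin d => gaussianReal 0 v) i
    have h := integral_sq_gaussianReal' hv
    rw [← hmap, integral_map (measurable_pi_apply i).aemeasurable
      (by rw [hmap]; exact (measurable_id.pow_const 2).aestronglyMeasurable)] at h
    exact h
  -- expansion of inner products and norms
  set g : EuclideanSpace ℝ (Fin d) := gradF x with hgdef
  have hinner_expand : ∀ y : Fin d → ℝ, ⟪g, e.symm y⟫ = ∑ i, g i * y i := by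
    intro y
    rw [PiLp.inner_apply]
    simp [hedef, RCLike.inner_apply, MeasurableEquiv.symm_symm, MeasurableEquiv.coe_toLp,
      mul_comm]
  have hnorm_expand : ∀ z : EuclideanSpace ℝ (Fin d), ‖z‖ ^ 2 = ∑ i, (z i) ^ 2 := by
    intro z
    rw [← real_inner_self_eq_norm_sq, PiLp.inner_apply]
    simp [RCLike.inner_apply, sq]
  -- integrability of the inner product and squared norm
  have hinner_int : Integrable (fun z : EuclideanSpace ℝ (Fin d) => ⟪g, z⟫) μ := by
    rw [hμ', integrable_map_equiv]
    have hfun : ((fun z : EuclideanSpace ℝ (Fin d) => ⟪g, z⟫) ∘ e.symm)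
        = fun y : Fin d → ℝ => ∑ i, g i * y i := funext fun y => hinner_expand y
    rw [hfun]
    exact integrable_finset_sum _ fun i _ => (heval_int i).const_mul _
  have hnormsq_int : Integrable (fun z : EuclideanSpace ℝ (Fin d) => ‖z‖ ^ 2) μ := by
    rw [hμ', integrable_map_equiv]
    have hfun : ((fun z : EuclideanSpace ℝ (Fin d) => ‖z‖ ^ 2) ∘ e.symm)
        = fun y : Fin d → ℝ => ∑ i, (y i) ^ 2 := funext fun y => by
      simp only [Function.comp_apply]
      rw [hnorm_expand]
      simp [hedef, MeasurableEquiv.symm_symm, MeasurableEquiv.coe_toLp]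
    rw [hfun]
    exact integrable_finset_sum _ fun i _ => heval_sq_int i
  have hinner_eq : ∫ z, ⟪g, z⟫ ∂μ = 0 := by
    rw [hμ', integral_map_equiv]
    calc ∫ y, ⟪g, e.symm y⟫ ∂P = ∫ y, ∑ i, g i * y i ∂P := by
          exact integral_congr_ae (Filter.Eventually.of_forall fun y => hinner_expand y)
      _ = ∑ i, ∫ y, g i * y i ∂P :=
          integral_finset_sum _ fun i _ => (heval_int i).const_mul _
      _ = 0 := by
          refine Finset.sum_eq_zero fun i _ => ?_
          rw [integral_const_mul, heval_eq i, mul_zero]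
  have hnormsq_eq : ∫ z, ‖z‖ ^ 2 ∂μ = d * (v : ℝ) := by
    rw [hμ', integral_map_equiv]
    calc ∫ y, ‖e.symm y‖ ^ 2 ∂P = ∫ y, ∑ i, (y i) ^ 2 ∂P := by
          exact integral_congr_ae (Filter.Eventually.of_forall fun y => hnorm_expand (e.symm y))
      _ = ∑ i : Fin d, ∫ y, (y i) ^ 2 ∂P :=
          integral_finset_sum _ fun i _ => heval_sq_int i
      _ = d * (v : ℝ) := by simp [heval_sq_eq]
  -- the two-sided descent bound
  have hFneg : ∀ y, HasGradientAt (fun w => -F w) (-gradF y) y := by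
    intro y
    have h := (hF y).hasFDerivAt.neg
    rw [hasGradientAt_iff_hasFDerivAt, map_neg]
    exact h
  have hLipneg : LipschitzWith L.toNNReal (fun y => -gradF y) := fun y₁ y₂ => by
    simpa [edist_neg_neg] using hLip y₁ y₂
  have hr_bound : ∀ z : EuclideanSpace ℝ (Fin d),
      |F (x + z) - F x - ⟪g, z⟫| ≤ L / 2 * ‖z‖ ^ 2 := by
    intro z
    rw [abs_le]
    constructor
    · have h := descent_lemma hFneg hLipneg x z
      rw [Real.coe_toNNReal L hL] at h
      simp only [inner_neg_left] at h
      rw [hgdef]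
      linarith
    · have h := descent_lemma hF hLip x z
      rw [Real.coe_toNNReal L hL] at h
      rw [hgdef]
      linarith
  have hcont : Continuous F := continuous_iff_continuousAt.2 fun y => (hF y).continuousAt
  set r : EuclideanSpace ℝ (Fin d) → ℝ := fun z => F (x + z) - F x - ⟪g, z⟫ with hrdef
  have hr_meas : AEStronglyMeasurable r μ := by
    refine Continuous.aestronglyMeasurable ?_
    exact ((hcont.comp (continuous_const.add continuous_id)).sub continuous_const).sub
      (Continuous.inner continuous_const continuous_id)
  have hr_int : Integrable r μ := by
    refine Integrable.mono' (hnormsq_int.const_mul (L / 2)) hr_meas ?_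
    filter_upwards with z
    rw [Real.norm_eq_abs]
    exact hr_bound z
  have hsplit : (fun z : EuclideanSpace ℝ (Fin d) => F (x + z))
      = fun z => r z + (⟪g, z⟫ + F x) := by
    funext z
    simp only [hrdef]
    ring
  constructor
  · rw [hsplit]
    exact hr_int.add (hinner_int.add (integrable_const _))
  · have hig : Integrable (fun z : EuclideanSpace ℝ (Fin d) => ⟪g, z⟫ + F x) μ :=
      hinner_int.add (integrable_const _)
    have hic : Integrable (fun _ : EuclideanSpace ℝ (Fin d) => F x) μ := integrable_const _
    have h1 : ∫ z, (⟪g, z⟫ + F x) ∂μ = F x := by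
      rw [integral_add hinner_int hic, hinner_eq, integral_const]
      simp
    have hIF : ∫ zz, F (x + zz) ∂μ = (∫ z, r z ∂μ) + F x := by
      rw [hsplit, integral_add hr_int hig, h1]
    have hrle : ∫ z, r z ∂μ ≤ L * d * γ := by
      calc ∫ z, r z ∂μ ≤ ∫ z, L / 2 * ‖z‖ ^ 2 ∂μ := by
            refine integral_mono hr_int (hnormsq_int.const_mul _) fun z => ?_
            exact le_trans (le_abs_self _) (hr_bound z)
        _ = L / 2 * (d * (v : ℝ)) := by rw [integral_const_mul, hnormsq_eq]
        _ = L * d * γ := by rw [hvr]; ring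
    rw [hIF]
    linarith
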